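/- Let n ≥ 1, let m_1, …, m_n > 0 be real numbers and let q_1, …, q_n ∈ ℝ² be nonzero vectors. Then the following are equivalent: (i) for every ζ ≥ 0, ∑_{i=1}^n m_i q_i (|q_i|² + ζ)^{-3/2} = 0 (the zero vector of ℝ²); (ii) the configuration is balanced, i.e. for every r > 0 such that the set F_r = {i : |q_i| = r} is nonempty, one has ∑_{i ∈ F_r} m_i q_i = 0. (Condition (i) is exactly the condition that the vertical line through the center of mass is invariant under the gravitational field generated by the bodies q_1, …, q_n with masses m_1, …, m_n, for a point at height z with ζ = z².) -/

import Mathlib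

open Finset Filter Topology

/-- If all power sums of distinct positive reals with coefficients `d` vanish,
then all coefficients vanish. -/
private lemma powerSums_zero {ι : Type*} [DecidableEq ι] (x d : ι → ℝ) :
    ∀ S : Finset ι, (∀ i ∈ S, 0 < x i) → Set.InjOn x S →
      (∀ k : ℕ, ∑ i ∈ S, d i * x i ^ k = 0) → ∀ i ∈ S, d i = 0 := by
  intro S
  induction S using Finset.strongInduction with
  | _ S ih =>
    intro hx hinj h
    rcases S.eq_empty_or_nonempty with rfl | hne
    · simp
    obtain ⟨i₀, hi₀, hmax⟩ := S.exists_max_image x hne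
    have hx₀ : 0 < x i₀ := hx i₀ hi₀
    -- the sequence k ↦ ∑ d i (x i / x i₀)^k is constantly 0 and tends to d i₀
    have hzero : ∀ k : ℕ, ∑ i ∈ S, d i * (x i / x i₀) ^ k = 0 := by
      intro k
      have : ∑ i ∈ S, d i * (x i / x i₀) ^ k
          = (∑ i ∈ S, d i * x i ^ k) / x i₀ ^ k := by
        rw [Finset.sum_div]
        exact Finset.sum_congr rfl fun i _ => by rw [div_pow, mul_div_assoc]
      rw [this, h k, zero_div]
    have hterm : ∀ i ∈ S, Tendsto (fun k : ℕ => d i * (x i / x i₀) ^ k) atTop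
        (𝓝 (if i = i₀ then d i₀ else 0)) := by
      intro i hi
      by_cases h' : i = i₀
      · subst h'
        simp only [if_pos rfl, div_self hx₀.ne', one_pow, mul_one]
        exact tendsto_const_nhds
      · have hlt : x i < x i₀ :=
          lt_of_le_of_ne (hmax i hi) (fun he => h' (hinj hi hi₀ he))
        have ht : Tendsto (fun k : ℕ => (x i / x i₀) ^ k) atTop (𝓝 0) :=
          tendsto_pow_atTop_nhds_zero_of_lt_one
            (div_nonneg (hx i hi).le hx₀.le) ((div_lt_one hx₀).2 hlt)
        simpa [h'] using ht.const_mul (d i)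
    have hsum : Tendsto (fun k : ℕ => ∑ i ∈ S, d i * (x i / x i₀) ^ k) atTop
        (𝓝 (∑ i ∈ S, if i = i₀ then d i₀ else 0)) :=
      tendsto_finset_sum S hterm
    have hval : (∑ i ∈ S, if i = i₀ then d i₀ else 0) = d i₀ := by
      rw [Finset.sum_ite_eq' S i₀ (fun _ => d i₀)]
      simp [hi₀]
    have hd0 : d i₀ = 0 := by
      have h1 : Tendsto (fun _ : ℕ => (0 : ℝ)) atTop
          (𝓝 (∑ i ∈ S, if i = i₀ then d i₀ else 0)) := by
        simpa only [funext hzero] using hsum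
      have h2 := tendsto_nhds_unique h1 tendsto_const_nhds
      rw [hval] at h2
      exact h2
    -- now recurse on the erase
    have herase : ∀ k : ℕ, ∑ i ∈ S.erase i₀, d i * x i ^ k = 0 := by
      intro k
      have h2 := Finset.add_sum_erase S (fun i => d i * x i ^ k) hi₀
      simp only [hd0, zero_mul, zero_add, h k] at h2
      exact h2
    have hrec := ih (S.erase i₀) (Finset.erase_ssubset hi₀)
      (fun i hi => hx i (Finset.mem_of_mem_erase hi))
      (hinj.mono (by exact_mod_cast Finset.erase_subset i₀ S)) herase
    intro i hi
    by_cases h' : i = i₀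
    · exact h' ▸ hd0
    · exact hrec i (Finset.mem_erase.2 ⟨h', hi⟩)

/-- Linear independence of the functions `ζ ↦ (a + ζ) ^ (-3/2)` on `[0, ∞)`
for distinct positive `a`. -/
private lemma coeffs_zero (S : Finset ℝ) (hS : ∀ a ∈ S, 0 < a) (c : ℝ → ℝ)
    (h : ∀ ζ : ℝ, 0 ≤ ζ → ∑ a ∈ S, c a * (a + ζ) ^ (-(3 / 2) : ℝ) = 0) :
    ∀ a ∈ S, c a = 0 := by
  -- differentiate k times
  have hder : ∀ k : ℕ, ∀ ζ : ℝ, 0 < ζ →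
      ∑ a ∈ S, c a * (a + ζ) ^ ((-(3 / 2) : ℝ) - k) = 0 := by
    intro k
    induction k with
    | zero => intro ζ hζ; simpa using h ζ hζ.le
    | succ k ih =>
      intro ζ hζ
      set p : ℝ := (-(3 / 2) : ℝ) - k with hp
      have hpneg : p < 0 := by
        have : (0 : ℝ) ≤ k := Nat.cast_nonneg k
        rw [hp]; linarith
      have hpos : ∀ a ∈ S, 0 < a + ζ := fun a ha => add_pos (hS a ha) hζ
      have hD : HasDerivAt (fun z => ∑ a ∈ S, c a * (a + z) ^ p)
          (∑ a ∈ S, c a * (p * (a + ζ) ^ (p - 1))) ζ := by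
        apply HasDerivAt.fun_sum
        intro a ha
        have h1 : HasDerivAt (fun z : ℝ => a + z) 1 ζ := (hasDerivAt_id ζ).const_add a
        have h2 := h1.rpow_const (p := p) (Or.inl (hpos a ha).ne')
        simpa [mul_comm, mul_assoc, mul_left_comm] using h2.const_mul (c a)
      have hev : (fun z => ∑ a ∈ S, c a * (a + z) ^ p) =ᶠ[𝓝 ζ] (fun _ => (0 : ℝ)) := by
        filter_upwards [Ioi_mem_nhds hζ] with z hz
        exact ih z hz
      have hD0 : HasDerivAt (fun _ : ℝ => (0 : ℝ))
          (∑ a ∈ S, c a * (p * (a + ζ) ^ (p - 1))) ζ :=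
        hD.congr_of_eventuallyEq hev.symm
      have hzero : (∑ a ∈ S, c a * (p * (a + ζ) ^ (p - 1))) = 0 :=
        hD0.unique (hasDerivAt_const ζ 0)
      have hpull : (∑ a ∈ S, c a * (p * (a + ζ) ^ (p - 1)))
          = p * ∑ a ∈ S, c a * (a + ζ) ^ (p - 1) := by
        rw [Finset.mul_sum]
        exact Finset.sum_congr rfl fun a _ => by ring
      rw [hpull] at hzero
      have := mul_eq_zero.mp hzero
      rcases this with hc | hc
      · exact absurd hc hpneg.ne
      · have heq : (-(3 / 2) : ℝ) - (k + 1 : ℕ) = p - 1 := by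
          rw [hp]; push_cast; ring
        rw [heq]; exact hc
  -- specialize at ζ = 1 and turn into power sums
  have hk : ∀ k : ℕ,
      ∑ a ∈ S, (c a * (a + 1) ^ (-(3 / 2) : ℝ)) * ((a + 1)⁻¹) ^ k = 0 := by
    intro k
    have h1 := hder k 1 one_pos
    rw [← h1]
    refine Finset.sum_congr rfl fun a ha => ?_
    have hpos : (0 : ℝ) < a + 1 := by linarith [hS a ha]
    rw [Real.rpow_sub hpos, Real.rpow_natCast, inv_pow]; ring
  have := powerSums_zero (fun a => (a + 1)⁻¹)
    (fun a => c a * (a + 1) ^ (-(3 / 2) : ℝ)) S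
    (fun a ha => inv_pos.2 (by linarith [hS a ha]))
    (fun a ha b hb hab => by
      have ha1 : (0:ℝ) < a + 1 := by linarith [hS a ha]
      have hb1 : (0:ℝ) < b + 1 := by linarith [hS b hb]
      have := inv_inj.mp hab
      linarith)
    hk
  intro a ha
  have h2 := this a ha
  have h3 : (a + 1 : ℝ) ^ (-(3 / 2) : ℝ) ≠ 0 :=
    (Real.rpow_pos_of_pos (by linarith [hS a ha]) _).ne'
  exact (mul_eq_zero.mp h2).resolve_right h3

theorem line_invariant_iff_balanced
    (n : ℕ) (hn : 1 ≤ n) (m : Fin n → ℝ) (hm : ∀ i, 0 < m i)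
    (q : Fin n → EuclideanSpace ℝ (Fin 2)) (hq : ∀ i, q i ≠ 0) :
    (∀ ζ : ℝ, 0 ≤ ζ →
        ∑ i, (m i * (‖q i‖ ^ 2 + ζ) ^ (-(3 / 2) : ℝ)) • q i = 0) ↔
    (∀ r : ℝ, 0 < r → (∃ i, ‖q i‖ = r) →
        ∑ i ∈ Finset.univ.filter (fun i => ‖q i‖ = r), m i • q i = 0) := by
  classical
  constructor
  · intro h r hr ⟨i₀, hi₀⟩
    -- coordinatewise condition
    have coord : ∀ j : Fin 2, ∀ ζ : ℝ, 0 ≤ ζ →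
        ∑ i, m i * (‖q i‖ ^ 2 + ζ) ^ (-(3 / 2) : ℝ) * q i j = 0 := by
      intro j ζ hζ
      have := congrArg (EuclideanSpace.proj j) (h ζ hζ)
      simpa [map_sum, map_smul, smul_eq_mul, mul_assoc] using this
    set S : Finset ℝ := Finset.image (fun i => ‖q i‖ ^ 2) Finset.univ with hSdef
    have hSpos : ∀ a ∈ S, 0 < a := by
      intro a ha
      obtain ⟨i, -, rfl⟩ := Finset.mem_image.mp ha
      exact pow_pos (norm_pos_iff.2 (hq i)) 2
    have hcz : ∀ j : Fin 2, ∀ a ∈ S,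
        (∑ i ∈ Finset.univ.filter (fun i => ‖q i‖ ^ 2 = a), m i * q i j) = 0 := by
      intro j
      apply coeffs_zero S hSpos
      intro ζ hζ
      have hfib := Finset.sum_fiberwise_of_maps_to
        (s := Finset.univ) (g := fun i => ‖q i‖ ^ 2) (t := S)
        (fun i _ => Finset.mem_image_of_mem _ (Finset.mem_univ i))
        (fun i => m i * (‖q i‖ ^ 2 + ζ) ^ (-(3 / 2) : ℝ) * q i j)
      calc ∑ a ∈ S, (∑ i ∈ Finset.univ.filter (fun i => ‖q i‖ ^ 2 = a), m i * q i j)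
              * (a + ζ) ^ (-(3 / 2) : ℝ)
          = ∑ a ∈ S, ∑ i ∈ Finset.univ.filter (fun i => ‖q i‖ ^ 2 = a),
              m i * (‖q i‖ ^ 2 + ζ) ^ (-(3 / 2) : ℝ) * q i j := by
            refine Finset.sum_congr rfl fun a _ => ?_
            rw [Finset.sum_mul]
            refine Finset.sum_congr rfl fun i hi => ?_
            have : ‖q i‖ ^ 2 = a := (Finset.mem_filter.mp hi).2
            rw [this]; ring
        _ = ∑ i, m i * (‖q i‖ ^ 2 + ζ) ^ (-(3 / 2) : ℝ) * q i j := hfib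
        _ = 0 := coord j ζ hζ
    have hfe : Finset.univ.filter (fun i => ‖q i‖ = r)
        = Finset.univ.filter (fun i => ‖q i‖ ^ 2 = r ^ 2) := by
      ext i
      simp only [Finset.mem_filter, Finset.mem_univ, true_and]
      constructor
      · rintro rfl; rfl
      · intro h2
        have h3 : (‖q i‖ - r) * (‖q i‖ + r) = 0 := by linear_combination h2
        rcases mul_eq_zero.mp h3 with h4 | h4
        · linarith
        · have := norm_nonneg (q i); linarith
    have haS : (r ^ 2 : ℝ) ∈ S := by
      rw [hSdef]
      exact Finset.mem_image.mpr ⟨i₀, Finset.mem_univ _, by rw [hi₀]⟩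
    apply PiLp.ext
    intro j
    have h0 := hcz j (r ^ 2) haS
    have := congrArg (EuclideanSpace.proj j)
      (rfl : (∑ i ∈ Finset.univ.filter (fun i => ‖q i‖ = r), m i • q i)
        = ∑ i ∈ Finset.univ.filter (fun i => ‖q i‖ = r), m i • q i)
    calc (∑ i ∈ Finset.univ.filter (fun i => ‖q i‖ = r), m i • q i) j
        = EuclideanSpace.proj j (∑ i ∈ Finset.univ.filter (fun i => ‖q i‖ = r), m i • q i) := rfl
      _ = ∑ i ∈ Finset.univ.filter (fun i => ‖q i‖ = r), m i * q i j := by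
          rw [map_sum]
          exact Finset.sum_congr rfl fun i _ => by
            simp [map_smul, smul_eq_mul]
      _ = ∑ i ∈ Finset.univ.filter (fun i => ‖q i‖ ^ 2 = r ^ 2), m i * q i j := by
          rw [hfe]
      _ = 0 := h0
  · intro h ζ hζ
    have hfib := Finset.sum_fiberwise_of_maps_to
      (s := Finset.univ) (g := fun i => ‖q i‖) (t := Finset.image (fun i => ‖q i‖) Finset.univ)
      (fun i _ => Finset.mem_image_of_mem _ (Finset.mem_univ i))
      (fun i => (m i * (‖q i‖ ^ 2 + ζ) ^ (-(3 / 2) : ℝ)) • q i)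
    rw [← hfib]
    apply Finset.sum_eq_zero
    intro r hr
    obtain ⟨i, -, hi⟩ := Finset.mem_image.mp hr
    have hrpos : 0 < r := hi ▸ norm_pos_iff.2 (hq i)
    calc ∑ j ∈ Finset.univ.filter (fun j => ‖q j‖ = r),
            (m j * (‖q j‖ ^ 2 + ζ) ^ (-(3 / 2) : ℝ)) • q j
        = ∑ j ∈ Finset.univ.filter (fun j => ‖q j‖ = r),
            ((r ^ 2 + ζ) ^ (-(3 / 2) : ℝ)) • (m j • q j) := by
          refine Finset.sum_congr rfl fun j hj => ?_
          have : ‖q j‖ = r := (Finset.mem_filter.mp hj).2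
          rw [this, smul_smul, mul_comm]
      _ = ((r ^ 2 + ζ) ^ (-(3 / 2) : ℝ)) •
            ∑ j ∈ Finset.univ.filter (fun j => ‖q j‖ = r), m j • q j := by
          rw [Finset.smul_sum]
      _ = 0 := by rw [h r hrpos ⟨i, hi⟩, smul_zero]
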